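/- For a 2π-periodic real-analytic function f on ℝ, the trapezoidal rule T^(n)(f) = (2π/n)∑_{i=0}^{n−1} f(2πi/n) converges to ∫₀^{2π} f(φ)dφ exponentially fast: there exist C > 0 and q ∈ (0,1) with |T^(n)(f) − ∫₀^{2π} f dφ| ≤ C q^n for all n ≥ 1. -/

import Mathlib

open Real intervalIntegral

lemma contour_shift (F : ℂ → ℂ) (a : ℝ) (ha : 0 < a)
    (hF : DifferentiableOn ℂ F {z : ℂ | |z.im| < a})
    (hper : ∀ z : ℂ, |z.im| < a → F (z + 2*π) = F z)
    (k : ℤ) (c : ℝ) (hc : |c| < a) :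
    (∫ x in (0:ℝ)..(2*π), Complex.exp (-(k:ℂ) * x * Complex.I) * F x)
      = ∫ x in (0:ℝ)..(2*π), Complex.exp (-(k:ℂ) * (x + c*Complex.I) * Complex.I) *
          F (x + c*Complex.I) := by
  set G : ℂ → ℂ := fun z => Complex.exp (-(k:ℂ) * z * Complex.I) * F z with hG
  have hGdiff : DifferentiableOn ℂ G {z : ℂ | |z.im| < a} := by
    apply DifferentiableOn.mul _ hF
    exact (Complex.differentiable_exp.comp (by fun_prop)).differentiableOn
  have hrect : Set.uIcc ((c:ℂ)*Complex.I).re (((2*π:ℝ)):ℂ).re ×ℂ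
      Set.uIcc ((c:ℂ)*Complex.I).im (((2*π:ℝ)):ℂ).im ⊆ {z : ℂ | |z.im| < a} := by
    intro z hz
    have h2 := (Complex.mem_reProdIm.mp hz).2
    simp only [Complex.mul_im, Complex.ofReal_re, Complex.I_im, Complex.ofReal_im, Complex.I_re,
      mul_zero, mul_one, zero_mul, add_zero, zero_add, Complex.ofReal_im] at h2
    simp only [Set.mem_setOf_eq]
    rcases Set.mem_uIcc.mp h2 with ⟨h1, h2⟩ | ⟨h1, h2⟩ <;>
      [skip; skip] <;>
      · rw [abs_lt]; constructor <;> nlinarith [neg_abs_le c, le_abs_self c, abs_nonneg c]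
  have key := Complex.integral_boundary_rect_eq_zero_of_differentiableOn G ((c:ℂ)*Complex.I)
    (((2*π:ℝ)):ℂ) (hGdiff.mono hrect)
  simp only [Complex.mul_re, Complex.mul_im, Complex.ofReal_re, Complex.ofReal_im,
    Complex.I_re, Complex.I_im, mul_zero, mul_one, zero_mul, sub_zero, add_zero, zero_add,
    zero_sub, neg_zero] at key
  -- vertical sides cancel
  have hvert : (∫ y in c..(0:ℝ), G ((2*π:ℝ) + y*Complex.I))
      = ∫ y in c..(0:ℝ), G ((0:ℝ) + y*Complex.I) := by
    apply intervalIntegral.integral_congr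
    intro y hy
    have hya : |y| < a := by
      rcases Set.mem_uIcc.mp hy with ⟨h1, h2⟩ | ⟨h1, h2⟩ <;>
        · rw [abs_lt]; constructor <;> nlinarith [neg_abs_le c, le_abs_self c, abs_nonneg c]
    have him : ((y:ℂ)*Complex.I).im = y := by simp
    have hFp : F ((2*π:ℝ) + y*Complex.I) = F ((0:ℝ) + y*Complex.I) := by
      have := hper ((y:ℂ)*Complex.I) (by rw [him]; exact hya)
      rw [show ((2*π:ℝ):ℂ) + (y:ℂ)*Complex.I = (y:ℂ)*Complex.I + 2*π by push_cast; ring, this]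
      simp
    have hexp : Complex.exp (-(k:ℂ) * (((2*π:ℝ):ℂ) + y*Complex.I) * Complex.I)
        = Complex.exp (-(k:ℂ) * (((0:ℝ):ℂ) + y*Complex.I) * Complex.I) := by
      have harg : (-(k:ℂ) * (((2*π:ℝ):ℂ) + y*Complex.I) * Complex.I)
          = (-(k:ℂ) * (((0:ℝ):ℂ) + y*Complex.I) * Complex.I) + (-k:ℤ) * (2*(π:ℂ)*Complex.I) := by
        push_cast; ring
      rw [harg, Complex.exp_add, Complex.exp_int_mul_two_pi_mul_I, mul_one]
    simp only [hG]
    rw [hFp, hexp]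
  rw [hvert] at key
  have hmain : (∫ x in (0:ℝ)..(2*π), G (x + c*Complex.I))
      = ∫ x in (0:ℝ)..(2*π), G (x + (0:ℝ)*Complex.I) := by linear_combination key
  simp only [Complex.ofReal_zero, zero_mul, add_zero] at hmain
  exact hmain.symm


lemma node_sum (n : ℕ) (hn : 1 ≤ n) (k : ℤ) :
    ∑ i ∈ Finset.range n, Complex.exp ((k:ℂ) * ((2*π*i/n : ℝ):ℂ) * Complex.I)
      = if (n:ℤ) ∣ k then (n:ℂ) else 0 := by
  have hn0 : (n:ℂ) ≠ 0 := Nat.cast_ne_zero.mpr (by omega)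
  have hπ : (π:ℂ) ≠ 0 := Complex.ofReal_ne_zero.mpr Real.pi_ne_zero
  have h2πI : (2*(π:ℂ)*Complex.I) ≠ 0 :=
    mul_ne_zero (mul_ne_zero two_ne_zero hπ) Complex.I_ne_zero
  set ζ : ℂ := Complex.exp (2*(π:ℂ)*Complex.I*k/n) with hζ
  have hterm : ∀ i ∈ Finset.range n,
      Complex.exp ((k:ℂ)*((2*π*i/n:ℝ):ℂ)*Complex.I) = ζ^i := by
    intro i _
    rw [hζ, ← Complex.exp_nat_mul]
    congr 1
    push_cast
    field_simp
  rw [Finset.sum_congr rfl hterm]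
  by_cases hdvd : (n:ℤ) ∣ k
  · obtain ⟨m, rfl⟩ := hdvd
    have hz1 : ζ = 1 := by
      rw [hζ, show (2*(π:ℂ)*Complex.I*((((n:ℤ)*m : ℤ):ℤ):ℂ)/n) = (m:ℂ)*(2*π*Complex.I) by
        push_cast; field_simp]
      exact Complex.exp_int_mul_two_pi_mul_I m
    simp [hz1]
  · have hζn : ζ^n = 1 := by
      rw [hζ, ← Complex.exp_nat_mul,
        show (n:ℂ) * (2*(π:ℂ)*Complex.I*k/n) = (k:ℂ)*(2*π*Complex.I) by field_simp]
      exact Complex.exp_int_mul_two_pi_mul_I k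
    have hζ1 : ζ ≠ 1 := by
      intro h
      obtain ⟨m, hm⟩ := Complex.exp_eq_one_iff.mp (hζ ▸ h)
      apply hdvd
      rw [mul_div_assoc, mul_comm ((m:ℂ))] at hm
      have h1 : (k:ℂ)/(n:ℂ) = m := mul_left_cancel₀ h2πI hm
      have h2 : (k:ℂ) = (m:ℂ)*(n:ℂ) := (div_eq_iff hn0).mp h1
      exact ⟨m, by exact_mod_cast h2.trans (mul_comm _ _)⟩
    rw [geom_sum_eq hζ1, hζn]
    simp [hdvd]



/-- Exponential convergence of the trapezoidal rule for a `2π`-periodic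
real-analytic function: if `f` extends to a bounded holomorphic function on a
strip `{|Im z| < a}`, then there exist `C > 0`, `q ∈ (0,1)` with
`|T⁽ⁿ⁾(f) − ∫₀^{2π} f| ≤ C qⁿ` for all `n ≥ 1`, where
`T⁽ⁿ⁾(f) = (2π/n) ∑_{i<n} f(2πi/n)`. -/
theorem trapezoidal_exponential_convergence
    (f : ℝ → ℝ) (hper : Function.Periodic f (2 * π))
    (F : ℂ → ℂ) (a : ℝ) (ha : 0 < a)
    (hF : DifferentiableOn ℂ F {z : ℂ | |z.im| < a})
    (hbd : ∃ M : ℝ, ∀ z ∈ {z : ℂ | |z.im| < a}, ‖F z‖ ≤ M)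
    (hext : ∀ x : ℝ, F x = (f x : ℂ)) :
    ∃ C > 0, ∃ q ∈ Set.Ioo (0 : ℝ) 1, ∀ n : ℕ, 1 ≤ n →
      |(2 * π / n) * (∑ i ∈ Finset.range n, f (2 * π * i / n)) -
        ∫ φ in (0:ℝ)..(2 * π), f φ| ≤ C * q ^ n := by
  obtain ⟨M, hM⟩ := hbd
  have hπ : (0:ℝ) < π := Real.pi_pos
  haveI : Fact (0 < 2*π) := ⟨by positivity⟩
  have hM0 : 0 ≤ M := le_trans (norm_nonneg _) (hM 0 (by simp [ha]))
  have hSopen : IsOpen {z : ℂ | |z.im| < a} := by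
    have : {z : ℂ | |z.im| < a} = (fun z : ℂ => |z.im|) ⁻¹' Set.Iio a := rfl
    rw [this]
    exact (Complex.continuous_im.abs).isOpen_preimage _ isOpen_Iio
  have hmemS : ∀ x : ℝ, (x:ℂ) ∈ {z : ℂ | |z.im| < a} := fun x => by
    simp [Set.mem_setOf_eq, ha]
  -- F is periodic on the strip
  have hFper : ∀ z : ℂ, |z.im| < a → F (z + 2*π) = F z := by
    have hFan : AnalyticOnNhd ℂ F {z : ℂ | |z.im| < a} := hF.analyticOnNhd hSopen
    have hshift : AnalyticOnNhd ℂ (fun z => F (z + 2*π)) {z : ℂ | |z.im| < a} := by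
      intro z hz
      have h1 : AnalyticAt ℂ F (z + 2*π) := hFan _ (by simpa using hz)
      have h2 : AnalyticAt ℂ (fun w : ℂ => w + 2*π) z := analyticAt_id.add analyticAt_const
      exact AnalyticAt.comp (g := F) (f := fun w : ℂ => w + 2*π) h1 h2
    have hconv : Convex ℝ {z : ℂ | |z.im| < a} := by
      have : {z : ℂ | |z.im| < a} = {z:ℂ | -a < z.im} ∩ {z:ℂ | z.im < a} := by
        ext z; simp [abs_lt]
      rw [this]
      exact (convex_halfSpace_im_gt _).inter (convex_halfSpace_im_lt _)
    have hfreq : ∃ᶠ z in nhdsWithin (0:ℂ) {(0:ℂ)}ᶜ, F (z + 2*π) = F z := by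
      have hreal : ∀ x : ℝ, F ((x:ℂ) + 2*π) = F x := by
        intro x
        rw [show (x:ℂ) + 2*π = ((x + 2*π : ℝ):ℂ) by push_cast; ring, hext, hext]
        exact_mod_cast hper x
      set u : ℕ → ℂ := fun n => Complex.ofReal (((n:ℝ)+1)⁻¹) with hu
      have htend : Filter.Tendsto u Filter.atTop (nhdsWithin (0:ℂ) {(0:ℂ)}ᶜ) := by
        apply tendsto_nhdsWithin_of_tendsto_nhds_of_eventually_within
        · have h3 : Filter.Tendsto (fun n : ℕ => ((n:ℝ)+1)⁻¹) Filter.atTop (nhds 0) :=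
            tendsto_one_div_add_atTop_nhds_zero_nat.congr (by intro n; rw [one_div])
          have h4 := (Complex.continuous_ofReal.tendsto 0).comp h3
          simpa [hu, Function.comp_def] using h4
        · filter_upwards with n
          simp only [Set.mem_compl_iff, Set.mem_singleton_iff, hu]
          intro h
          rw [show (0:ℂ) = ((0:ℝ):ℂ) by simp] at h
          have h5 : ((n:ℝ)+1)⁻¹ = 0 := Complex.ofReal_injective h
          rw [inv_eq_zero] at h5
          have h6 : (0:ℝ) < (n:ℝ)+1 := by positivity
          linarith
      exact htend.frequently (Filter.Frequently.of_forall fun n => hreal _)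
    intro z hz
    exact hshift.eqOn_of_preconnected_of_frequently_eq hFan hconv.isPreconnected (hmemS 0) hfreq hz
  -- continuity
  have hfc : Continuous fun x : ℝ => (f x : ℂ) := by
    have h1 : Continuous fun x : ℝ => F x := by
      apply continuous_iff_continuousAt.mpr
      intro x
      exact (hF.differentiableAt (hSopen.mem_nhds (hmemS x))).continuousAt.comp
        Complex.continuous_ofReal.continuousAt
    simpa [hext] using h1
  have hperC : Function.Periodic (fun x:ℝ => (f x : ℂ)) (2*π) := fun x => by
    simp [hper x]
  set g : AddCircle (2*π) → ℂ := hperC.lift with hgdef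
  have hgcoe : ∀ x : ℝ, g (x : AddCircle (2*π)) = (f x : ℂ) := fun x => hperC.lift_coe x
  have hgcont : Continuous g := by
    rw [(QuotientAddGroup.isQuotientMap_mk _).continuous_iff]
    exact hfc
  set q : ℝ := Real.exp (-(a/2)) with hq
  have hq0 : 0 < q := Real.exp_pos _
  have hq1 : q < 1 := by
    rw [hq, Real.exp_lt_one_iff]
    linarith
  -- Fourier coefficient bound
  have hcoeff : ∀ k : ℤ, ‖fourierCoeff g k‖ ≤ M * q ^ k.natAbs := by
    intro k
    set c : ℝ := if 0 ≤ k then -(a/2) else a/2 with hc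
    have hca : |c| < a := by
      rw [hc]; split_ifs
      · rw [abs_neg, _root_.abs_of_nonneg (by linarith : (0:ℝ) ≤ a/2)]; linarith
      · rw [_root_.abs_of_nonneg (by linarith : (0:ℝ) ≤ a/2)]; linarith
    have heq : fourierCoeff g k = (1/(2*π) : ℝ) •
        ∫ x in (0:ℝ)..(2*π), Complex.exp (-(k:ℂ) * x * Complex.I) * F x := by
      rw [fourierCoeff_eq_intervalIntegral g k 0, zero_add]
      congr 1
      apply intervalIntegral.integral_congr
      intro x _
      show (fourier (-k)) (x : AddCircle (2*π)) • g (x : AddCircle (2*π)) = _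
      rw [hgcoe x, ← hext x, smul_eq_mul, fourier_coe_apply]
      congr 2
      have hπC : (π:ℂ) ≠ 0 := Complex.ofReal_ne_zero.mpr Real.pi_ne_zero
      push_cast
      field_simp
    rw [heq, contour_shift F a ha hF hFper k c hca]
    have hbnd : ∀ x ∈ Set.uIoc (0:ℝ) (2*π),
        ‖Complex.exp (-(k:ℂ) * (x + c*Complex.I) * Complex.I) * F (x + c*Complex.I)‖
          ≤ M * q ^ k.natAbs := by
      intro x _
      rw [norm_mul]
      have h1 : ‖Complex.exp (-(k:ℂ) * ((x:ℂ) + c*Complex.I) * Complex.I)‖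
          = Real.exp (k * c) := by
        rw [Complex.norm_exp]
        congr 1
        simp [Complex.mul_re, Complex.mul_im]
      have h2 : ‖F ((x:ℂ) + c*Complex.I)‖ ≤ M := by
        apply hM
        have : ((x:ℂ) + c*Complex.I).im = c := by simp
        simp only [Set.mem_setOf_eq, this]
        exact hca
      have h3 : Real.exp (k*c) = q ^ k.natAbs := by
        rw [hq, ← Real.exp_nat_mul]
        congr 1
        rw [hc]
        rcases le_or_gt 0 k with h | h
        · rw [if_pos h]
          have hna : (k.natAbs : ℝ) = (k:ℝ) := by
            rw [Nat.cast_natAbs]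
            exact_mod_cast _root_.abs_of_nonneg h
          rw [hna]
        · rw [if_neg (not_le.mpr h)]
          have hna : (k.natAbs : ℝ) = -(k:ℝ) := by
            rw [Nat.cast_natAbs]
            exact_mod_cast _root_.abs_of_neg h
          rw [hna]; ring
      rw [h1, h3, mul_comm M]
      exact mul_le_mul_of_nonneg_left h2 (pow_nonneg hq0.le _)
    rw [norm_smul, Real.norm_eq_abs, abs_of_pos (by positivity)]
    have h4 := intervalIntegral.norm_integral_le_of_norm_le_const hbnd
    rw [sub_zero, abs_of_pos (by positivity)] at h4
    calc 1/(2*π) * ‖∫ x in (0:ℝ)..(2*π),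
          Complex.exp (-(k:ℂ) * (x + c*Complex.I) * Complex.I) * F (x + c*Complex.I)‖
        ≤ 1/(2*π) * (M * q ^ k.natAbs * (2*π)) :=
          mul_le_mul_of_nonneg_left h4 (by positivity)
      _ = M * q ^ k.natAbs := by field_simp
  -- summability
  have hsum : Summable (fourierCoeff g) := by
    apply Summable.of_norm_bounded ?_ hcoeff
    apply Summable.of_nat_of_neg_add_one
    · have h5 : (fun n:ℕ => M * q ^ (((n:ℤ)).natAbs)) = fun n:ℕ => M * q^n := by
        funext n
        have h6 : ((n:ℤ)).natAbs = n := by omega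
        rw [h6]
      rw [h5]
      exact (summable_geometric_of_lt_one hq0.le hq1).mul_left M
    · have h5 : (fun n:ℕ => M * q ^ ((-((n:ℤ)+1)).natAbs)) = fun n:ℕ => (M*q) * q^n := by
        funext n
        have h6 : (-((n:ℤ)+1)).natAbs = n + 1 := by omega
        rw [h6, pow_succ]
        ring
      rw [h5]
      exact (summable_geometric_of_lt_one hq0.le hq1).mul_left (M*q)
  -- pointwise convergence of Fourier series
  have hpt : ∀ x : ℝ, HasSum
      (fun k : ℤ => fourierCoeff g k * Complex.exp ((k:ℂ) * x * Complex.I)) ((f x : ℂ)) := by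
    intro x
    have h0 := has_pointwise_sum_fourier_series_of_summable
      (f := (⟨g, hgcont⟩ : C(AddCircle (2*π), ℂ))) hsum (x : AddCircle (2*π))
    have hfun : (fun k : ℤ => fourierCoeff g k • fourier k (x : AddCircle (2*π))) =
        fun k : ℤ => fourierCoeff g k * Complex.exp ((k:ℂ) * x * Complex.I) := by
      funext k
      rw [smul_eq_mul, fourier_coe_apply]
      congr 2
      push_cast
      field_simp [Complex.ofReal_ne_zero.mpr Real.pi_ne_zero]
      try ring
    have h0' : HasSum (fun k : ℤ => fourierCoeff g k • fourier k (x : AddCircle (2*π)))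
        (g (x:AddCircle (2*π))) := h0
    rw [hgcoe x, hfun] at h0'
    exact h0'
  -- constants
  set C0 : ℝ := 4*π*M*(1-q)⁻¹ with hC0
  have hC0nn : 0 ≤ C0 := by
    rw [hC0]
    apply mul_nonneg (mul_nonneg (by positivity) hM0)
    rw [inv_nonneg]
    linarith
  refine ⟨C0 + 1, by linarith, q, ⟨hq0, hq1⟩, ?_⟩
  intro n hn
  have hnne : n ≠ 0 := by omega
  have hn0 : (n:ℝ) ≠ 0 := Nat.cast_ne_zero.mpr hnne
  have hnC : (n:ℂ) ≠ 0 := Nat.cast_ne_zero.mpr hnne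
  set r : ℝ := q^n with hr
  have hr0 : 0 ≤ r := pow_nonneg hq0.le n
  have hr1 : r < 1 := pow_lt_one₀ hq0.le hq1 hnne
  have hrq : r ≤ q := by
    calc r = q^n := hr
      _ ≤ q^1 := pow_le_pow_of_le_one hq0.le hq1.le hn
      _ = q := pow_one q
  -- trapezoidal sum as a sum over Fourier modes
  have hS1 : HasSum (fun k : ℤ => ∑ i ∈ Finset.range n,
      fourierCoeff g k * Complex.exp ((k:ℂ)*((2*π*i/n:ℝ):ℂ)*Complex.I))
      (∑ i ∈ Finset.range n, ((f (2*π*i/n) : ℝ) : ℂ)) :=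
    hasSum_sum (fun i _ => hpt (2*π*i/n))
  have hS2 : HasSum (fun k : ℤ => fourierCoeff g k * (if (n:ℤ) ∣ k then (n:ℂ) else 0))
      (∑ i ∈ Finset.range n, ((f (2*π*i/n):ℝ):ℂ)) := by
    have hfn : (fun k : ℤ => ∑ i ∈ Finset.range n,
        fourierCoeff g k * Complex.exp ((k:ℂ)*((2*π*i/n:ℝ):ℂ)*Complex.I))
        = fun k : ℤ => fourierCoeff g k * (if (n:ℤ) ∣ k then (n:ℂ) else 0) := by
      funext k
      rw [← Finset.mul_sum, node_sum n hn k]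
    rwa [hfn] at hS1
  have hnZ : (n:ℤ) ≠ 0 := by exact_mod_cast hnne
  have hinj : Function.Injective (fun m : ℤ => m * (n:ℤ)) := fun x y hxy =>
    mul_right_cancel₀ hnZ hxy
  have hvan : ∀ k ∉ Set.range (fun m : ℤ => m * (n:ℤ)),
      fourierCoeff g k * (if (n:ℤ) ∣ k then (n:ℂ) else 0) = 0 := by
    intro k hk
    rw [if_neg, mul_zero]
    intro hdvd
    obtain ⟨m, hm⟩ := hdvd
    exact hk ⟨m, by show m*(n:ℤ) = k; rw [hm, mul_comm]⟩
  have hS3 := (hinj.hasSum_iff hvan).mpr hS2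
  have hS4 : HasSum (fun m : ℤ => (2*(π:ℂ)) * fourierCoeff g (m*(n:ℤ)))
      ((2*(π:ℂ)/(n:ℂ)) * ∑ i ∈ Finset.range n, ((f (2*π*i/n):ℝ):ℂ)) := by
    have h15 := hS3.mul_left ((2*(π:ℂ))/(n:ℂ))
    convert h15 using 1
    · rfl
    funext m
    simp only [Function.comp_def]
    rw [if_pos (dvd_mul_left (n:ℤ) m)]
    field_simp
  have hS5 : HasSum (fun m : ℤ => if m = 0 then (2*(π:ℂ)) * fourierCoeff g 0 else 0)
      ((2*(π:ℂ))*fourierCoeff g 0) := hasSum_ite_eq 0 _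
  have hS6 := hS4.sub hS5
  -- the integral is 2π times the zeroth coefficient
  have hint : ((∫ φ in (0:ℝ)..(2*π), f φ : ℝ) : ℂ) = (2*(π:ℂ)) * fourierCoeff g 0 := by
    have h16 : (∫ x in (0:ℝ)..(2*π), fourier (-0) (x:AddCircle (2*π)) • g (x:AddCircle (2*π)))
        = ((∫ φ in (0:ℝ)..(2*π), f φ : ℝ) : ℂ) := by
      rw [← intervalIntegral.integral_ofReal]
      apply intervalIntegral.integral_congr
      intro x _
      show fourier (-0) (x:AddCircle (2*π)) • g (x:AddCircle (2*π)) = ((f x:ℝ):ℂ)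
      rw [neg_zero, fourier_zero, one_smul, hgcoe]
    rw [fourierCoeff_eq_intervalIntegral g 0 0, zero_add, h16, Complex.real_smul]
    push_cast
    try field_simp [Complex.ofReal_ne_zero.mpr Real.pi_ne_zero]
    try ring
  -- identify the value
  have hval : (((2*π/n) * (∑ i ∈ Finset.range n, f (2*π*i/n))
        - ∫ φ in (0:ℝ)..(2*π), f φ : ℝ) : ℂ)
      = (2*(π:ℂ)/(n:ℂ)) * (∑ i ∈ Finset.range n, ((f (2*π*i/n):ℝ):ℂ))
        - (2*(π:ℂ))*fourierCoeff g 0 := by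
    push_cast
    rw [hint]
    try push_cast
    try ring
  -- termwise bound
  have hbd2 : ∀ m : ℤ, ‖(2*(π:ℂ))*fourierCoeff g (m*(n:ℤ))
      - (if m = 0 then (2*(π:ℂ))*fourierCoeff g 0 else 0)‖
      ≤ (fun m : ℤ => if m = 0 then (0:ℝ) else (2*π*M) * r ^ m.natAbs) m := by
    intro m
    by_cases hm : m = 0
    · simp [hm]
    · simp only [if_neg hm]
      rw [sub_zero, norm_mul]
      have h8 : ‖(2*(π:ℂ))‖ = 2*π := by
        rw [show (2*(π:ℂ)) = ((2*π:ℝ):ℂ) by push_cast; ring, Complex.norm_real,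
          Real.norm_eq_abs, _root_.abs_of_pos (by positivity)]
      have h9 := hcoeff (m*(n:ℤ))
      have h10 : (m*(n:ℤ)).natAbs = n * m.natAbs := by
        rw [Int.natAbs_mul]
        simp [Nat.mul_comm]
      rw [h10, pow_mul, ← hr] at h9
      rw [h8]
      calc 2*π*‖fourierCoeff g (m*(n:ℤ))‖ ≤ 2*π*(M * r^m.natAbs) :=
            mul_le_mul_of_nonneg_left h9 (by positivity)
        _ = 2*π*M * r^m.natAbs := by ring
  -- sum of the bounds
  set D : ℝ := ((2*π*M)*(1-r)⁻¹ - 2*π*M) + ((2*π*M)*r)*(1-r)⁻¹ with hD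
  have hdsum : HasSum (fun m : ℤ => if m = 0 then (0:ℝ) else (2*π*M) * r ^ m.natAbs) D := by
    rw [hD]
    apply HasSum.of_nat_of_neg_add_one
    · have h17 : (fun m:ℕ => if (m:ℤ) = 0 then (0:ℝ) else (2*π*M) * r ^ ((m:ℤ)).natAbs)
          = fun m:ℕ => (2*π*M) * r^m - (if m = 0 then (2*π*M) else 0) := by
        funext m
        by_cases hm : m = 0
        · simp [hm]
        · have h18 : ((m:ℤ)).natAbs = m := by omega
          have h19 : ¬((m:ℤ) = 0) := by exact_mod_cast hm
          simp [hm, h19, h18]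
      rw [h17]
      exact ((hasSum_geometric_of_lt_one hr0 hr1).mul_left (2*π*M)).sub (hasSum_ite_eq 0 _)
    · have h20 : (fun m:ℕ => if (-((m:ℤ)+1)) = 0 then (0:ℝ)
          else (2*π*M) * r ^ ((-((m:ℤ)+1)).natAbs)) = fun m:ℕ => ((2*π*M)*r) * r^m := by
        funext m
        have h21 : ¬((-((m:ℤ)+1)) = 0) := by omega
        have h22 : (-((m:ℤ)+1)).natAbs = m+1 := by omega
        rw [if_neg h21, h22, pow_succ]
        ring
      rw [h20]
      exact (hasSum_geometric_of_lt_one hr0 hr1).mul_left _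
  -- norm estimate
  have hnorm : ‖(2*(π:ℂ)/(n:ℂ)) * (∑ i ∈ Finset.range n, ((f (2*π*i/n):ℝ):ℂ))
      - (2*(π:ℂ))*fourierCoeff g 0‖ ≤ D := by
    have hsn : Summable fun m : ℤ => ‖(2*(π:ℂ))*fourierCoeff g (m*(n:ℤ))
        - (if m = 0 then (2*(π:ℂ))*fourierCoeff g 0 else 0)‖ :=
      Summable.of_nonneg_of_le (fun m => norm_nonneg _) hbd2 hdsum.summable
    calc ‖(2*(π:ℂ)/(n:ℂ)) * (∑ i ∈ Finset.range n, ((f (2*π*i/n):ℝ):ℂ))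
          - (2*(π:ℂ))*fourierCoeff g 0‖
        = ‖∑' m : ℤ, ((2*(π:ℂ))*fourierCoeff g (m*(n:ℤ))
            - (if m = 0 then (2*(π:ℂ))*fourierCoeff g 0 else 0))‖ := by rw [hS6.tsum_eq]
      _ ≤ ∑' m : ℤ, ‖(2*(π:ℂ))*fourierCoeff g (m*(n:ℤ))
            - (if m = 0 then (2*(π:ℂ))*fourierCoeff g 0 else 0)‖ := norm_tsum_le_tsum_norm hsn
      _ ≤ ∑' m : ℤ, (fun m : ℤ => if m = 0 then (0:ℝ) else (2*π*M) * r ^ m.natAbs) m :=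
            Summable.tsum_le_tsum hbd2 hsn hdsum.summable
      _ = D := hdsum.tsum_eq
  -- final computation
  have h1r : 0 < 1 - r := by linarith
  have h1q : 0 < 1 - q := by linarith
  have hDle : D ≤ C0 * q^n := by
    have hinv : (1-r)⁻¹ ≤ (1-q)⁻¹ := by
      apply inv_anti₀ h1q
      linarith
    have hDeq : D = (2*π*M)*(2*r)*(1-r)⁻¹ := by
      rw [hD]
      field_simp
      ring
    rw [hDeq, hC0, hr]
    calc (2*π*M)*(2*q^n)*(1-r)⁻¹ ≤ (2*π*M)*(2*q^n)*(1-q)⁻¹ := by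
          apply mul_le_mul_of_nonneg_left hinv
          apply mul_nonneg (mul_nonneg (by positivity) hM0)
          positivity
      _ = 4*π*M*(1-q)⁻¹ * q^n := by ring
  have habs : |(2 * π / n) * (∑ i ∈ Finset.range n, f (2 * π * i / n)) -
        ∫ φ in (0:ℝ)..(2 * π), f φ|
      = ‖(((2*π/n) * (∑ i ∈ Finset.range n, f (2*π*i/n))
          - ∫ φ in (0:ℝ)..(2*π), f φ : ℝ) : ℂ)‖ := by
    rw [Complex.norm_real, Real.norm_eq_abs]
  rw [habs, hval]
  calc ‖(2*(π:ℂ)/(n:ℂ)) * (∑ i ∈ Finset.range n, ((f (2*π*i/n):ℝ):ℂ))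
        - (2*(π:ℂ))*fourierCoeff g 0‖
      ≤ D := hnorm
    _ ≤ C0 * q^n := hDle
    _ ≤ (C0+1) * q^n := by nlinarith [pow_nonneg hq0.le n]
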